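/- Let E be a finite directed graph, K the union of the minimal critical components of E, and QE(K) the set of paths μe where e is an edge with s(e) ∈ K, r(e) ∉ K, and μ is any path (possibly of length 0) with s(μ) = r(e) and all vertices of μ outside the hereditary closure H of K. Then the paths in QE(K) are pairwise incomparable: no element of QE(K) is a proper extension of another, i.e., for distinct λ, λ' ∈ QE(K), neither λ = λ'λ'' nor λ' = λλ'' for any path λ''. -/

import Mathlib

open scoped Classical

def IsPathFun {V E : Type} (r s : E → V) (n : ℕ) (f : Fin n → E) : Prop :=
  ∀ i : Fin n, ∀ h : i.1 + 1 < n, s (f i) = r (f ⟨i.1 + 1, h⟩)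

def Reach {V E : Type} (r s : E → V) : V → V → Prop :=
  Relation.ReflTransGen (fun a b => ∃ e, r e = a ∧ s e = b)

def Hered {V E : Type} (r s : E → V) (H : Set V) : Prop :=
  ∀ v ∈ H, ∀ w, Reach r s v w → w ∈ H

noncomputable def specRad {ι : Type} [Fintype ι] [DecidableEq ι] (A : Matrix ι ι ℝ) : ℝ :=
  sSup (insert 0 ((fun z : ℂ => ‖z‖) '' spectrum ℂ (A.map Complex.ofReal)))

noncomputable def subRad {V : Type} [Fintype V] [DecidableEq V]
    (A : Matrix V V ℝ) (C : Set V) : ℝ :=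
  specRad (A.submatrix (Subtype.val : ↥C → V) Subtype.val)

def IsSCC {V E : Type} (r s : E → V) (C : Set V) : Prop :=
  ∃ v, C = {w | Reach r s v w ∧ Reach r s w v}

def IsCrit {V E : Type} [Fintype V] [DecidableEq V] (r s : E → V)
    (A : Matrix V V ℝ) (C : Set V) : Prop :=
  IsSCC r s C ∧ subRad A C = specRad A

def IsMinCrit {V E : Type} [Fintype V] [DecidableEq V] (r s : E → V)
    (A : Matrix V V ℝ) (C : Set V) : Prop :=
  IsCrit r s A C ∧
    ∀ D : Set V, IsCrit r s A D → (∃ d ∈ D, ∃ c ∈ C, Reach r s d c) → D = C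

/-- Paths μe making a quick exit from K: the last edge has source in K and range
outside K, and all earlier vertices of the path lie outside H. -/
def QEset {V E : Type} (r s : E → V) (K H : Set V) : Set (Σ n : ℕ, Fin n → E) :=
  {p | IsPathFun r s p.1 p.2 ∧ ∃ h : 0 < p.1,
    s (p.2 ⟨p.1 - 1, Nat.sub_lt h one_pos⟩) ∈ K ∧
    r (p.2 ⟨p.1 - 1, Nat.sub_lt h one_pos⟩) ∉ K ∧
    ∀ i : Fin p.1, i.1 + 1 < p.1 → r (p.2 i) ∉ H}

theorem qe_not_prefix {V E : Type} (r s : E → V) (K H : Set V) (hKH : K ⊆ H)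
    (p q : Σ n : ℕ, Fin n → E) (hp : p ∈ QEset r s K H) (hq : q ∈ QEset r s K H)
    (hlt : p.1 < q.1) (hag : ∀ i : Fin p.1, p.2 i = q.2 ⟨i.1, Nat.lt_trans i.isLt hlt⟩) :
    False := by
  obtain ⟨hppath, h0p, hsp, hrp, hHp⟩ := hp
  obtain ⟨hqpath, h0q, hsq, hrq, hHq⟩ := hq
  have hsub : p.1 - 1 + 1 = p.1 := Nat.succ_pred_eq_of_pos h0p
  have h1 : p.1 - 1 + 1 < q.1 := by omega
  have heq : s (q.2 ⟨p.1 - 1, Nat.lt_trans (Nat.sub_lt h0p one_pos) hlt⟩)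
      = r (q.2 ⟨p.1 - 1 + 1, h1⟩) := hqpath _ h1
  have hsK : s (q.2 ⟨p.1 - 1, Nat.lt_trans (Nat.sub_lt h0p one_pos) hlt⟩) ∈ K := by
    rw [← hag ⟨p.1 - 1, Nat.sub_lt h0p one_pos⟩]; exact hsp
  rw [heq] at hsK
  rcases lt_or_ge (p.1 - 1 + 1 + 1) q.1 with hc | hc
  · exact hHq ⟨p.1 - 1 + 1, h1⟩ hc (hKH hsK)
  · have : q.1 - 1 = p.1 - 1 + 1 := by omega
    apply hrq
    convert hsK using 3
    exact Fin.ext this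
  done

/-- Distinct quick-exit paths are incomparable: neither is a proper extension of the other. -/
theorem stmt13 {V E : Type} [Fintype V] [Fintype E] [DecidableEq V] (r s : E → V)
    (A : Matrix V V ℝ)
    (hA : ∀ v w, A v w = Nat.card {e : E // r e = v ∧ s e = w})
    (K : Set V) (hK : K = {v | ∃ C : Set V, IsMinCrit r s A C ∧ v ∈ C})
    (H : Set V) (hHdef : H = {w | ∃ v ∈ K, Reach r s v w})
    (p q : Σ n : ℕ, Fin n → E) (hp : p ∈ QEset r s K H) (hq : q ∈ QEset r s K H)
    (hne : p ≠ q) :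
    (¬ ∃ hlt : p.1 < q.1, ∀ i : Fin p.1, p.2 i = q.2 ⟨i.1, Nat.lt_trans i.isLt hlt⟩) ∧
    (¬ ∃ hlt : q.1 < p.1, ∀ i : Fin q.1, q.2 i = p.2 ⟨i.1, Nat.lt_trans i.isLt hlt⟩) := by
  have hKH : K ⊆ H := by
    intro v hv
    rw [hHdef]
    exact ⟨v, hv, Relation.ReflTransGen.refl⟩
  constructor
  · rintro ⟨hlt, hag⟩
    exact qe_not_prefix r s K H hKH p q hp hq hlt hag
  · rintro ⟨hlt, hag⟩
    exact qe_not_prefix r s K H hKH q p hq hp hlt hag
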